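/- arXiv:math/0701743 — 4 statements merged into one kernel-verified Lean document; each statement's English description precedes it below -/
import Mathlib

section
/- For every complex number α with Re(α) > 0 and every complex z with |z| < 1, Li_α(z) = (1/Γ(α)) · ∫_0^∞ q^(α-1) · z/(e^q − z) dq (Appell's integral representation). -/
open Complex MeasureTheory

/-- Appell's integral representation: for `Re α > 0` and `|z| < 1`,
`Li_α(z) = (1/Γ(α)) ∫_0^∞ q^(α-1) z/(e^q - z) dq`. -/
theorem polylog_eq_appell_integral (α : ℂ) (hα : 0 < α.re) (z : ℂ) (hz : ‖z‖ < 1) :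
    (∑' n : ℕ, z ^ (n + 1) / ((n : ℂ) + 1) ^ α) =
      (1 / Complex.Gamma α) *
        ∫ q in Set.Ioi (0 : ℝ), (q : ℂ) ^ (α - 1) * (z / (Complex.exp q - z)) := by
  have key : HasSum (fun n : ℕ ↦ Complex.Gamma α * (z ^ (n + 1)) / (((n : ℝ) + 1 : ℝ) : ℂ) ^ α)
      (mellin (fun q ↦ z / (Complex.exp q - z)) α) := by
    apply hasSum_mellin (a := fun n : ℕ ↦ z ^ (n + 1)) (p := fun n : ℕ ↦ (n : ℝ) + 1)
      (fun n ↦ Or.inr (by positivity)) hα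
    · intro t ht
      rw [Set.mem_Ioi] at ht
      set w : ℂ := z * Complex.exp (-t) with hw
      have hwn : ‖w‖ < 1 := by
        rw [hw, norm_mul, Complex.norm_exp]
        simp only [neg_re, ofReal_re]
        calc ‖z‖ * Real.exp (-t) ≤ ‖z‖ * 1 := by
              gcongr; exact Real.exp_le_one_iff.mpr (by linarith)
          _ < 1 := by rwa [mul_one]
      have hgeo := (hasSum_geometric_of_norm_lt_one hwn).mul_left w
      have hterm : ∀ n : ℕ, w * w ^ n = z ^ (n + 1) * Real.exp (-((n : ℝ) + 1) * t) := by
        intro n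
        rw [hw, mul_pow, mul_mul_mul_comm, ← pow_succ', ← Complex.exp_nat_mul,
          ← Complex.exp_add]
        push_cast
        ring_nf
      have hval : w * (1 - w)⁻¹ = z / (Complex.exp t - z) := by
        have he : Complex.exp (t : ℂ) ≠ 0 := Complex.exp_ne_zero _
        have h1w : (1 : ℂ) - w ≠ 0 := by
          intro h
          have : w = 1 := by linear_combination -h
          rw [this] at hwn; simp at hwn
        have h2 : Complex.exp (t : ℂ) - z ≠ 0 := by
          intro h
          apply h1w
          have hzexp : z = Complex.exp (t : ℂ) := by linear_combination -h
          rw [hw, hzexp, ← Complex.exp_add]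
          simp
        rw [hw, Complex.exp_neg]
        field_simp
      rw [← hval]
      exact hgeo.congr_fun (fun n ↦ (hterm n).symm)
    · have hgsum : Summable (fun n : ℕ ↦ ‖z‖ ^ (n + 1)) :=
        (summable_geometric_of_lt_one (norm_nonneg z) hz).comp_injective
          (add_left_injective 1)
      apply Summable.of_nonneg_of_le (fun n ↦ by positivity) (fun n ↦ ?_) hgsum
      rw [norm_pow]
      apply div_le_self (by positivity)
      apply Real.one_le_rpow (by linarith [Nat.cast_nonneg (α := ℝ) n]) hα.le
  have hΓ : Complex.Gamma α ≠ 0 := by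
    apply Complex.Gamma_ne_zero
    intro m hm
    rw [hm] at hα
    simp only [neg_re, natCast_re] at hα
    have : (0:ℝ) ≤ (m:ℝ) := Nat.cast_nonneg m
    linarith
  have hsum_eq : (∑' n : ℕ, Complex.Gamma α * z ^ (n + 1) / (((n : ℝ) + 1 : ℝ) : ℂ) ^ α)
      = Complex.Gamma α * ∑' n : ℕ, z ^ (n + 1) / ((n : ℂ) + 1) ^ α := by
    rw [← tsum_mul_left]
    congr 1
    ext n
    push_cast
    ring
  have hmel : mellin (fun q : ℝ ↦ z / (Complex.exp q - z)) α
      = ∫ q in Set.Ioi (0 : ℝ), (q : ℂ) ^ (α - 1) * (z / (Complex.exp q - z)) := by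
    simp only [mellin, smul_eq_mul]
  have ht := key.tsum_eq
  rw [hsum_eq, hmel] at ht
  rw [← ht, one_div, ← mul_assoc, inv_mul_cancel₀ hΓ, one_mul]
end

section
/- For every complex α with Re(α) > 0, as z → ∞ along a ray z = |z| e^{iθ} with fixed θ ∈ (0, 2π), one has Li_α(z) = −(1/Γ(α+1)) · ((Log z)^α + o((Log z)^α)), where Li_α denotes the analytic continuation of the polylogarithm to ℂ ∖ [1,∞) given by Appell's integral. -/
open Complex MeasureTheory Filter Topology

section PolylogAux

open Set

/-- The ray `{s e^{iθ} : s ≥ 0}` stays at positive distance from `1` (here in the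
equivalent form: `s` stays at positive distance from `e^{iθ}`). -/
private lemma polylog_ray_lb (θ : ℝ) (hθ : θ ∈ Set.Ioo 0 (2 * Real.pi)) :
    ∃ c : ℝ, 0 < c ∧ ∀ s : ℝ, 0 ≤ s → c ≤ ‖(s : ℂ) - Complex.exp (θ * Complex.I)‖ := by
  have hπ := Real.pi_pos
  have key : ∀ c : ℝ, 0 ≤ c → ∀ w : ℂ, c ^ 2 ≤ Complex.normSq w → c ≤ ‖w‖ := by
    intro c hc w h
    nlinarith [norm_nonneg w, Complex.sq_norm w]
  have hnormSq : ∀ s : ℝ, Complex.normSq ((s : ℂ) - Complex.exp (θ * Complex.I)) =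
      (s - Real.cos θ) ^ 2 + (Real.sin θ) ^ 2 := by
    intro s
    rw [Complex.normSq_apply]
    simp [Complex.exp_ofReal_mul_I_re, Complex.exp_ofReal_mul_I_im]
    ring
  by_cases hpi : θ = Real.pi
  · refine ⟨1, one_pos, fun s hs => key 1 one_pos.le _ ?_⟩
    rw [hnormSq, hpi, Real.cos_pi, Real.sin_pi]
    nlinarith
  · have hsin : Real.sin θ ≠ 0 := by
      rcases lt_trichotomy θ Real.pi with h | h | h
      · exact (Real.sin_pos_of_pos_of_lt_pi hθ.1 h).ne'
      · exact absurd h hpi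
      · have h1 : 0 < Real.sin (θ - Real.pi) :=
          Real.sin_pos_of_pos_of_lt_pi (by linarith) (by linarith [hθ.2])
        have h2 : Real.sin (θ - Real.pi) = -Real.sin θ := by
          rw [Real.sin_sub, Real.sin_pi, Real.cos_pi]; ring
        intro h3; rw [h3, neg_zero] at h2; linarith
    refine ⟨|Real.sin θ|, abs_pos.2 hsin, fun s hs => key _ (abs_nonneg _) _ ?_⟩
    rw [hnormSq, _root_.sq_abs]
    nlinarith [sq_nonneg (s - Real.cos θ)]

private lemma polylog_denom_lb {θ c : ℝ}
    (hc : ∀ s : ℝ, 0 ≤ s → c ≤ ‖(s : ℂ) - Complex.exp (θ * Complex.I)‖)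
    {r : ℝ} (hr : 0 < r) (q : ℝ) :
    r * c ≤ ‖Complex.exp q - r * Complex.exp (θ * Complex.I)‖ := by
  have hr' : (r : ℂ) ≠ 0 := by exact_mod_cast hr.ne'
  have h1 : Complex.exp (q : ℂ) - r * Complex.exp (θ * Complex.I) =
      (r : ℂ) * (((Real.exp q / r : ℝ) : ℂ) - Complex.exp (θ * Complex.I)) := by
    push_cast
    field_simp
  rw [h1, norm_mul, Complex.norm_real, Real.norm_eq_abs, abs_of_pos hr]
  exact mul_le_mul_of_nonneg_left (hc _ (by positivity)) hr.le

private lemma polylog_denom_ne {θ c : ℝ} (hc0 : 0 < c)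
    (hc : ∀ s : ℝ, 0 ≤ s → c ≤ ‖(s : ℂ) - Complex.exp (θ * Complex.I)‖)
    {r : ℝ} (hr : 0 < r) (q : ℝ) :
    Complex.exp q - r * Complex.exp (θ * Complex.I) ≠ 0 := by
  intro h
  have := polylog_denom_lb hc hr q
  rw [h] at this
  simp at this
  nlinarith

private lemma polylog_num_bound {θ c : ℝ} (hc0 : 0 < c)
    (hc : ∀ s : ℝ, 0 ≤ s → c ≤ ‖(s : ℂ) - Complex.exp (θ * Complex.I)‖)
    {r : ℝ} (hr : 0 < r) (q : ℝ) :
    ‖(r : ℂ) * Complex.exp (θ * Complex.I) /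
      (Complex.exp q - r * Complex.exp (θ * Complex.I))‖ ≤ 1 / c := by
  rw [norm_div, norm_mul, Complex.norm_real, Real.norm_eq_abs, abs_of_pos hr]
  have h1 : ‖Complex.exp (θ * Complex.I)‖ = 1 := by
    rw [Complex.norm_exp]; simp
  rw [h1, mul_one]
  have h2 := polylog_denom_lb hc hr q
  have h3 : 0 < r * c := mul_pos hr hc0
  calc r / ‖Complex.exp q - r * Complex.exp (θ * Complex.I)‖
      ≤ r / (r * c) := by
        apply div_le_div_of_nonneg_left hr.le h3 h2
    _ = 1 / c := by field_simp

/-- The rescaled integrals converge, by dominated convergence. -/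
private lemma polylog_tendstoJ {θ c : ℝ} {α : ℂ} (hα : 0 < α.re) (hc0 : 0 < c)
    (hc : ∀ s : ℝ, 0 ≤ s → c ≤ ‖(s : ℂ) - Complex.exp (θ * Complex.I)‖) :
    Tendsto (fun r : ℝ => ∫ u in Ioi (0:ℝ),
      (u : ℂ) ^ (α - 1) * ((r : ℂ) * Complex.exp (θ * Complex.I) /
        (Complex.exp ((Real.log r * u : ℝ) : ℂ) - (r : ℂ) * Complex.exp (θ * Complex.I))))
      atTop (𝓝 (-(1/α))) := by
  have hα0 : α ≠ 0 := by intro h; rw [h] at hα; simp at hα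
  set F : ℝ → ℝ → ℂ := fun r u =>
    (u : ℂ) ^ (α - 1) * ((r : ℂ) * Complex.exp (θ * Complex.I) /
      (Complex.exp ((Real.log r * u : ℝ) : ℂ) - (r : ℂ) * Complex.exp (θ * Complex.I))) with hF
  set flim : ℝ → ℂ := fun u => if u < 1 then -(u : ℂ) ^ (α - 1) else 0 with hflim
  set g : ℝ → ℝ := fun u => u ^ (α.re - 1) * (if u ≤ 2 then 1/c else 2 * Real.exp (1 - u)) with hg
  -- the bound is integrable
  have h_int : IntegrableOn g (Ioi (0:ℝ)) := by
    rw [← Ioc_union_Ioi_eq_Ioi (by norm_num : (0:ℝ) ≤ 2), integrableOn_union]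
    constructor
    · have h1 : IntegrableOn (fun u : ℝ => u ^ (α.re - 1) * (1/c)) (Ioc 0 2) := by
        apply Integrable.mul_const
        exact (intervalIntegrable_iff_integrableOn_Ioc_of_le (by norm_num : (0:ℝ) ≤ 2)).1
          (intervalIntegral.intervalIntegrable_rpow' (by linarith))
      apply h1.congr_fun ?_ measurableSet_Ioc
      intro u hu
      simp [hg, hu.2]
    · have h2 : IntegrableOn (fun u : ℝ =>
          (2 * Real.exp 1) * (Real.exp (-u) * u ^ (α.re - 1))) (Ioi 2) := by
        exact ((Real.GammaIntegral_convergent hα).mono_set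
          (Ioi_subset_Ioi (by norm_num))).const_mul _
      apply h2.congr_fun ?_ measurableSet_Ioi
      intro u hu
      have h3 : ¬ u ≤ 2 := not_le.2 hu
      simp only [hg, h3, if_false]
      rw [show Real.exp (1 - u) = Real.exp 1 * Real.exp (-u) by rw [← Real.exp_add]; ring_nf]
      ring
  -- measurability
  have hmeasF : ∀ᶠ r : ℝ in atTop, AEStronglyMeasurable (F r) (volume.restrict (Ioi 0)) := by
    filter_upwards [eventually_gt_atTop (0:ℝ)] with r hr
    apply ContinuousOn.aestronglyMeasurable ?_ measurableSet_Ioi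
    apply ContinuousOn.mul
    · intro u hu
      apply ContinuousAt.continuousWithinAt
      apply ContinuousAt.cpow Complex.continuous_ofReal.continuousAt continuousAt_const
      exact Or.inl (by simpa using (hu : (0:ℝ) < u))
    · apply ContinuousOn.div continuousOn_const
      · exact Continuous.continuousOn (by continuity)
      · intro u _
        exact polylog_denom_ne hc0 hc hr _
  -- the bound holds
  have h_bound : ∀ᶠ r : ℝ in atTop, ∀ᵐ u ∂(volume.restrict (Ioi (0:ℝ))), ‖F r u‖ ≤ g u := by
    filter_upwards [eventually_ge_atTop (Real.exp 1)] with r hr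
    rw [ae_restrict_iff' measurableSet_Ioi]
    refine ae_of_all _ (fun u hu => ?_)
    have hu0 : (0:ℝ) < u := hu
    have hr0 : (0:ℝ) < r := lt_of_lt_of_le (Real.exp_pos 1) hr
    have hx1 : 1 ≤ Real.log r := by
      rw [← Real.log_exp 1]
      exact Real.log_le_log (Real.exp_pos 1) hr
    set x := Real.log r with hx
    rw [hF, norm_mul]
    have hnorm1 : ‖(u:ℂ) ^ (α - 1)‖ = u ^ (α.re - 1) := by
      rw [Complex.norm_cpow_eq_rpow_re_of_pos hu0]
      norm_num
    rw [hnorm1, hg]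
    apply mul_le_mul_of_nonneg_left ?_ (Real.rpow_nonneg hu0.le _)
    split_ifs with h2
    · exact polylog_num_bound hc0 hc hr0 (x * u)
    · push_neg at h2
      have hr_eq : r = Real.exp x := (Real.exp_log hr0).symm
      have habsθ : ‖Complex.exp (θ * Complex.I)‖ = 1 := by
        rw [Complex.norm_exp]; simp
      have htri : Real.exp (x * u) - r ≤
          ‖Complex.exp ((x * u : ℝ) : ℂ) - (r : ℂ) * Complex.exp (θ * Complex.I)‖ := by
        have h4 := norm_sub_norm_le (Complex.exp ((x * u : ℝ) : ℂ))
          ((r : ℂ) * Complex.exp (θ * Complex.I))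
        rw [Complex.norm_exp, norm_mul, Complex.norm_real, Real.norm_eq_abs, abs_of_pos hr0, habsθ, mul_one] at h4
        simpa using h4
      have hsmall : Real.exp x ≤ Real.exp (x * u) / 2 := by
        have h3 : x - x * u ≤ -1 := by nlinarith
        have h5 : Real.exp (x - x * u) ≤ Real.exp (-1) := Real.exp_le_exp.2 h3
        have he : Real.exp (-1) ≤ 1/2 := by
          rw [Real.exp_neg]
          have h6 : (2:ℝ) ≤ Real.exp 1 := by
            have := Real.add_one_le_exp 1; linarith
          rw [inv_le_comm₀ (Real.exp_pos 1) (by norm_num)]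
          linarith
        calc Real.exp x = Real.exp (x * u) * Real.exp (x - x * u) := by
              rw [← Real.exp_add]; ring_nf
          _ ≤ Real.exp (x * u) * (1/2) := by
              apply mul_le_mul_of_nonneg_left (h5.trans he) (Real.exp_pos _).le
          _ = Real.exp (x * u) / 2 := by ring
      have hA : Real.exp (x * u) / 2 ≤
          ‖Complex.exp ((x * u : ℝ) : ℂ) - (r : ℂ) * Complex.exp (θ * Complex.I)‖ := by
        rw [hr_eq] at htri ⊢
        linarith
      rw [norm_div, norm_mul, Complex.norm_real, Real.norm_eq_abs, abs_of_pos hr0,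
        habsθ, mul_one]
      have hpos : (0:ℝ) < Real.exp (x * u) / 2 := by positivity
      calc r / ‖Complex.exp ((x * u : ℝ) : ℂ) - (r : ℂ) * Complex.exp (θ * Complex.I)‖
          ≤ r / (Real.exp (x * u) / 2) := div_le_div_of_nonneg_left hr0.le hpos hA
        _ = 2 * (Real.exp x / Real.exp (x * u)) := by rw [hr_eq]; ring
        _ = 2 * Real.exp (x - x * u) := by rw [Real.exp_sub]
        _ ≤ 2 * Real.exp (1 - u) := by
            apply mul_le_mul_of_nonneg_left (Real.exp_le_exp.2 (by nlinarith)) (by norm_num)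
  -- pointwise limit
  have h_lim : ∀ᵐ u ∂(volume.restrict (Ioi (0:ℝ))),
      Tendsto (fun r : ℝ => F r u) atTop (𝓝 (flim u)) := by
    have hne1 : ∀ᵐ u : ℝ, u ≠ (1:ℝ) := by
      refine ae_iff.2 ?_
      have : {a : ℝ | ¬ a ≠ 1} = {1} := by ext a; simp
      rw [this]
      exact Real.volume_singleton
    filter_upwards [ae_restrict_mem measurableSet_Ioi, ae_restrict_of_ae hne1] with u hu hune
    have hu0 : (0:ℝ) < u := hu
    rcases lt_or_gt_of_ne hune with h1 | h1
    · -- u < 1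
      have hwlim : Tendsto (fun r : ℝ => Complex.exp ((Real.log r * u : ℝ) : ℂ) /
          ((r : ℂ) * Complex.exp (θ * Complex.I))) atTop (𝓝 0) := by
        rw [tendsto_zero_iff_norm_tendsto_zero]
        have heq : ∀ᶠ r : ℝ in atTop, Real.exp (Real.log r * (u - 1)) =
            ‖Complex.exp ((Real.log r * u : ℝ) : ℂ) / ((r : ℂ) * Complex.exp (θ * Complex.I))‖ := by
          filter_upwards [eventually_gt_atTop (0:ℝ)] with r hr0
          have habsθ : ‖Complex.exp (θ * Complex.I)‖ = 1 := by
            rw [Complex.norm_exp]; simp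
          rw [norm_div, Complex.norm_exp, norm_mul,
            Complex.norm_real, Real.norm_eq_abs, abs_of_pos hr0, habsθ, mul_one, Complex.ofReal_re]
          rw [show Real.log r * (u - 1) = Real.log r * u - Real.log r by ring,
            Real.exp_sub, Real.exp_log hr0]
        apply Tendsto.congr' heq
        apply Real.tendsto_exp_atBot.comp
        exact Real.tendsto_log_atTop.atTop_mul_const_of_neg (by linarith)
      have hdiv : Tendsto (fun r : ℝ => (1:ℂ) / (Complex.exp ((Real.log r * u : ℝ) : ℂ) /
          ((r : ℂ) * Complex.exp (θ * Complex.I)) - 1)) atTop (𝓝 ((1:ℂ)/(0 - 1))) :=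
        Tendsto.div tendsto_const_nhds (hwlim.sub tendsto_const_nhds) (by norm_num)
      rw [show (1:ℂ)/(0 - 1) = -1 by norm_num] at hdiv
      have hmain : Tendsto (fun r : ℝ => (r : ℂ) * Complex.exp (θ * Complex.I) /
          (Complex.exp ((Real.log r * u : ℝ) : ℂ) - (r : ℂ) * Complex.exp (θ * Complex.I)))
          atTop (𝓝 (-1)) := by
        refine Tendsto.congr' ?_ hdiv
        filter_upwards [eventually_gt_atTop (0:ℝ)] with r hr0
        have hz : (r : ℂ) * Complex.exp (θ * Complex.I) ≠ 0 :=
          mul_ne_zero (by exact_mod_cast hr0.ne') (Complex.exp_ne_zero _)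
        have hd : Complex.exp ((Real.log r * u : ℝ) : ℂ) -
            (r : ℂ) * Complex.exp (θ * Complex.I) ≠ 0 :=
          polylog_denom_ne hc0 hc hr0 _
        rw [div_sub_one hz, one_div_div]
      have h2 : (u:ℂ) ^ (α - 1) * (-1) = flim u := by simp [hflim, h1]
      exact h2 ▸ hmain.const_mul ((u:ℂ) ^ (α - 1))
    · -- u > 1
      have hb : Tendsto (fun r : ℝ => (Real.exp (Real.log r * (u - 1)) - 1)⁻¹) atTop (𝓝 0) := by
        have ha1 : Tendsto (fun r : ℝ => Real.log r * (u - 1)) atTop atTop :=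
          Real.tendsto_log_atTop.atTop_mul_const (by linarith)
        have ha2 := Real.tendsto_exp_atTop.comp ha1
        have ha3 := tendsto_atTop_add_const_right atTop (-1) ha2
        have ha4 := ha3.inv_tendsto_atTop
        simpa [sub_eq_add_neg, Function.comp, Pi.inv_def] using ha4
      have hmain : Tendsto (fun r : ℝ => (r : ℂ) * Complex.exp (θ * Complex.I) /
          (Complex.exp ((Real.log r * u : ℝ) : ℂ) - (r : ℂ) * Complex.exp (θ * Complex.I)))
          atTop (𝓝 0) := by
        apply squeeze_zero_norm' ?_ hb
        filter_upwards [eventually_gt_atTop (1:ℝ)] with r hr1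
        have hr0 : (0:ℝ) < r := by linarith
        set x := Real.log r with hx
        have hx0 : (0:ℝ) < x := Real.log_pos hr1
        have hr_eq : r = Real.exp x := (Real.exp_log hr0).symm
        have habsθ : ‖Complex.exp (θ * Complex.I)‖ = 1 := by
          rw [Complex.norm_exp]; simp
        have hfac : Real.exp (x * u) - Real.exp x = Real.exp x * (Real.exp (x * (u - 1)) - 1) := by
          rw [mul_sub, ← Real.exp_add, mul_one]
          ring_nf
        have hgt : 1 < Real.exp (x * (u - 1)) := by
          have := Real.exp_lt_exp.2 (show (0:ℝ) < x * (u - 1) by nlinarith)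
          simpa using this
        have hpos2 : (0:ℝ) < Real.exp (x * u) - Real.exp x := by
          rw [hfac]
          have := Real.exp_pos x
          nlinarith
        have htri : Real.exp (x * u) - r ≤
            ‖Complex.exp ((x * u : ℝ) : ℂ) - (r : ℂ) * Complex.exp (θ * Complex.I)‖ := by
          have h4 := norm_sub_norm_le (Complex.exp ((x * u : ℝ) : ℂ))
            ((r : ℂ) * Complex.exp (θ * Complex.I))
          rw [Complex.norm_exp, norm_mul, Complex.norm_real, Real.norm_eq_abs, abs_of_pos hr0, habsθ, mul_one] at h4
          simpa using h4
        rw [norm_div, norm_mul, Complex.norm_real, Real.norm_eq_abs,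
          abs_of_pos hr0, habsθ, mul_one]
        calc r / ‖Complex.exp ((x * u : ℝ) : ℂ) - (r : ℂ) * Complex.exp (θ * Complex.I)‖
            ≤ r / (Real.exp (x * u) - Real.exp x) := by
              apply div_le_div_of_nonneg_left hr0.le hpos2
              have hex : Real.exp x = r := Real.exp_log hr0
              linarith
          _ = (Real.exp (x * (u - 1)) - 1)⁻¹ := by
              rw [hr_eq, hfac, div_mul_eq_div_div, div_self (Real.exp_ne_zero x), one_div]
      have h2 : (u:ℂ) ^ (α - 1) * 0 = flim u := by
        simp [hflim, not_lt.2 h1.le]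
      exact h2 ▸ hmain.const_mul ((u:ℂ) ^ (α - 1))
  -- value of the limit integral
  have hlim_val : (∫ u in Ioi (0:ℝ), flim u) = -(1/α) := by
    have heq : EqOn flim ((Ioo (0:ℝ) 1).indicator (fun u => -(u:ℂ) ^ (α - 1))) (Ioi 0) := by
      intro u hu
      have hu0 : (0:ℝ) < u := hu
      by_cases h : u < 1
      · simp [hflim, h, indicator, Set.mem_Ioo, hu0]
      · simp [hflim, h, indicator, Set.mem_Ioo]
    rw [setIntegral_congr_fun measurableSet_Ioi heq, setIntegral_indicator measurableSet_Ioo,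
      show Ioi (0:ℝ) ∩ Ioo 0 1 = Ioo 0 1 from inter_eq_self_of_subset_right (fun x hx => hx.1),
      integral_neg]
    have hval : (∫ u in Ioo (0:ℝ) 1, (u:ℂ) ^ (α - 1)) = 1/α := by
      rw [← integral_Ioc_eq_integral_Ioo,
        ← intervalIntegral.integral_of_le (zero_le_one : (0:ℝ) ≤ 1),
        integral_cpow (Or.inl (by simp [hα] : (-1:ℝ) < (α - 1).re))]
      simp [hα0, Complex.zero_cpow, sub_add_cancel]
    rw [hval]
  rw [← hlim_val]
  exact tendsto_integral_filter_of_dominated_convergence g hmeasF h_bound h_int h_lim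

/-- Change of variables `q = (log r) · u` in Appell's integral. -/
private lemma polylog_subst (α : ℂ) (θ : ℝ) {r : ℝ} (hr : 1 < r) :
    (∫ q in Ioi (0:ℝ), (q : ℂ) ^ (α - 1) * ((r : ℂ) * Complex.exp (θ * Complex.I) /
        (Complex.exp q - (r : ℂ) * Complex.exp (θ * Complex.I)))) =
      ((Real.log r : ℝ) : ℂ) ^ α * ∫ u in Ioi (0:ℝ),
        (u : ℂ) ^ (α - 1) * ((r : ℂ) * Complex.exp (θ * Complex.I) /
          (Complex.exp ((Real.log r * u : ℝ) : ℂ) - (r : ℂ) * Complex.exp (θ * Complex.I))) := by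
  set x := Real.log r with hxdef
  have hx0 : (0:ℝ) < x := Real.log_pos hr
  have hxne : ((x : ℝ) : ℂ) ≠ 0 := by exact_mod_cast hx0.ne'
  set f : ℝ → ℂ := fun q => (q : ℂ) ^ (α - 1) * ((r : ℂ) * Complex.exp (θ * Complex.I) /
    (Complex.exp q - (r : ℂ) * Complex.exp (θ * Complex.I))) with hf
  have hsub := MeasureTheory.integral_comp_mul_left_Ioi f 0 hx0
  rw [mul_zero] at hsub
  have h1 : (∫ q in Ioi (0:ℝ), f q) = x • ∫ u in Ioi (0:ℝ), f (x * u) := by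
    rw [hsub, smul_inv_smul₀ hx0.ne']
  have h2 : (∫ u in Ioi (0:ℝ), f (x * u)) = (x : ℂ) ^ (α - 1) * ∫ u in Ioi (0:ℝ),
      (u : ℂ) ^ (α - 1) * ((r : ℂ) * Complex.exp (θ * Complex.I) /
        (Complex.exp ((x * u : ℝ) : ℂ) - (r : ℂ) * Complex.exp (θ * Complex.I))) := by
    rw [← integral_const_mul]
    apply setIntegral_congr_fun measurableSet_Ioi
    intro u hu
    have hu0 : (0:ℝ) < u := hu
    simp only [hf]
    push_cast
    rw [mul_cpow_ofReal_nonneg hx0.le hu0.le]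
    ring
  rw [h1, h2, Complex.real_smul, ← mul_assoc]
  congr 1
  rw [show α = 1 + (α - 1) by ring, Complex.cpow_add _ _ hxne, Complex.cpow_one]
  ring_nf

end PolylogAux

/-- Asymptotics of the fractional polylogarithm along a ray: for `Re α > 0` and fixed
`θ ∈ (0, 2π)`, the analytic continuation of `Li_α` given by Appell's integral satisfies
`Li_α(z) = -(1/Γ(α+1)) ((Log z)^α + o((Log z)^α))` as `z = r e^{iθ}, r → ∞`,
equivalently `Li_α(z)/(Log z)^α → -1/Γ(α+1)`. -/
theorem polylog_asymptotics (α : ℂ) (hα : 0 < α.re) (θ : ℝ) (hθ : θ ∈ Set.Ioo 0 (2 * Real.pi)) :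
    Tendsto
      (fun r : ℝ =>
        ((1 / Complex.Gamma α) *
            ∫ q in Set.Ioi (0 : ℝ),
              (q : ℂ) ^ (α - 1) *
                ((r : ℂ) * Complex.exp (θ * Complex.I) /
                  (Complex.exp q - (r : ℂ) * Complex.exp (θ * Complex.I)))) /
          Complex.log ((r : ℂ) * Complex.exp (θ * Complex.I)) ^ α)
      atTop
      (𝓝 (-(1 / Complex.Gamma (α + 1)))) := by
  have hπ := Real.pi_pos
  have hα0 : α ≠ 0 := by intro h; rw [h] at hα; simp at hα
  obtain ⟨c, hc0, hc⟩ := polylog_ray_lb θ hθ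
  set θ' : ℝ := (Complex.exp (θ * Complex.I)).arg with hθ'def
  have hexpθ : Complex.exp (θ * Complex.I) ≠ 0 := Complex.exp_ne_zero _
  have habs1 : ‖Complex.exp (θ * Complex.I)‖ = 1 := by
    rw [Complex.norm_exp]; simp
  have hθ'ne : θ' ≠ 0 := by
    intro h
    have hone : Complex.exp (θ * Complex.I) = 1 := by
      have h2 := Complex.norm_mul_exp_arg_mul_I (Complex.exp (θ * Complex.I))
      rw [habs1, ← hθ'def, h] at h2
      simpa using h2.symm
    rw [Complex.exp_eq_one_iff] at hone
    obtain ⟨n, hn⟩ := hone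
    have him : θ = (n : ℝ) * (2 * Real.pi) := by
      have := congrArg Complex.im hn
      simpa using this
    have h1 : (0 : ℝ) < n := by nlinarith [hθ.1, hθ.2]
    have h2 : (n : ℝ) < 1 := by nlinarith [hθ.1, hθ.2]
    have h3 : (0 : ℤ) < n := by exact_mod_cast h1
    have h4 : n < 1 := by exact_mod_cast h2
    omega
  have hlogz : ∀ r : ℝ, 1 < r →
      Complex.log ((r : ℂ) * Complex.exp (θ * Complex.I)) =
        (Real.log r : ℂ) + θ' * Complex.I := by
    intro r hr
    rw [Complex.log_ofReal_mul (by linarith) hexpθ]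
    congr 1
    apply Complex.ext
    · simp [Complex.log_re, habs1]
    · simp [Complex.log_im, hθ'def]
  -- the quotient of powers of logarithms tends to 1
  have hE : Tendsto (fun r : ℝ => ((Real.log r : ℂ)) ^ α /
      ((Real.log r : ℂ) + θ' * Complex.I) ^ α) atTop (𝓝 1) := by
    have hx : Tendsto Real.log atTop atTop := Real.tendsto_log_atTop
    have hw : Tendsto (fun r : ℝ => 1 + (θ' : ℂ) / (Real.log r : ℂ) * Complex.I) atTop (𝓝 1) := by
      have h0 : Tendsto (fun r : ℝ => θ' / Real.log r) atTop (𝓝 0) :=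
        tendsto_const_nhds.div_atTop hx
      have h1 : Tendsto (fun r : ℝ => (θ' : ℂ) / (Real.log r : ℂ)) atTop (𝓝 0) := by
        have h1' := (Complex.continuous_ofReal.tendsto 0).comp h0
        simp only [Function.comp_def, Complex.ofReal_div, Complex.ofReal_zero] at h1'
        exact h1'
      simpa using tendsto_const_nhds.add (h1.mul_const Complex.I)
    have hlogw : Tendsto (fun r : ℝ =>
        Complex.log (1 + (θ' : ℂ) / (Real.log r : ℂ) * Complex.I)) atTop (𝓝 0) := by
      have hcont : ContinuousAt Complex.log 1 :=
        continuousAt_clog (by simp [Complex.mem_slitPlane_iff])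
      have := hcont.tendsto.comp hw
      simpa [Complex.log_one, Function.comp_def] using this
    have hexp : Tendsto (fun r : ℝ => Complex.exp
        (-(α * Complex.log (1 + (θ' : ℂ) / (Real.log r : ℂ) * Complex.I)))) atTop (𝓝 1) := by
      have := (Complex.continuous_exp.tendsto (-(α * 0))).comp ((hlogw.const_mul α).neg)
      simpa [Function.comp_def] using this
    refine Tendsto.congr' ?_ hexp
    filter_upwards [eventually_gt_atTop (Real.exp 1)] with r hr
    have hx1 : (1 : ℝ) < Real.log r := by
      have := Real.log_lt_log (Real.exp_pos 1) hr
      rwa [Real.log_exp] at this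
    have hx0 : (0 : ℝ) < Real.log r := by linarith
    have hxne : ((Real.log r : ℝ) : ℂ) ≠ 0 := by exact_mod_cast hx0.ne'
    have hwne : (1 + (θ' : ℂ) / (Real.log r : ℂ) * Complex.I) ≠ 0 := by
      intro h
      have h2 : ((1 : ℂ) + (θ' : ℂ) / (Real.log r : ℂ) * Complex.I).im = θ' / Real.log r := by
        rw [show (θ' : ℂ) / (Real.log r : ℂ) = ((θ' / Real.log r : ℝ) : ℂ) by push_cast; ring]
        simp
      rw [h] at h2
      simp only [Complex.zero_im] at h2
      rcases div_eq_zero_iff.mp h2.symm with h' | h'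
      · exact hθ'ne h'
      · exact hx0.ne' h'
    have hfact : (Real.log r : ℂ) + θ' * Complex.I =
        (Real.log r : ℂ) * (1 + (θ' : ℂ) / (Real.log r : ℂ) * Complex.I) := by
      field_simp
    rw [hfact, Complex.cpow_def_of_ne_zero (mul_ne_zero hxne hwne),
      Complex.cpow_def_of_ne_zero hxne, Complex.log_ofReal_mul hx0 hwne, ← Complex.exp_sub]
    congr 1
    rw [← Complex.ofReal_log hx0.le]
    ring
  -- the rescaled integrals converge
  have hJ := polylog_tendstoJ hα hc0 hc
  -- final assembly
  have hval : (1 / Complex.Gamma α) * (-(1/α)) * 1 = -(1 / Complex.Gamma (α + 1)) := by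
    rw [Complex.Gamma_add_one α hα0, mul_one, one_div, one_div, one_div, mul_inv]
    ring
  rw [← hval]
  refine Tendsto.congr' ?_ ((tendsto_const_nhds.mul hJ).mul hE)
  filter_upwards [eventually_gt_atTop (1:ℝ)] with r hr
  rw [polylog_subst α θ hr, hlogz r hr]
  ring
end

section
/- For every complex α with Re(α) > 0 and every z ∈ ℂ ∖ [1,∞), the integral ∫_0^∞ q^{α−1} z/(e^q − z) dq converges absolutely, and the function of z so defined is holomorphic on ℂ ∖ [1,∞). -/
open Complex MeasureTheory

noncomputable def Tset : Set ℂ := Complex.ofReal '' Set.Ici 1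

lemma Tclosed : IsClosed Tset :=
  Complex.isometry_ofReal.isClosedEmbedding.isClosedMap _ isClosed_Ici

lemma mem_S_iff (z : ℂ) : (∀ x : ℝ, 1 ≤ x → z ≠ (x : ℂ)) ↔ z ∉ Tset := by
  simp only [Tset, Set.mem_image, Set.mem_Ici, not_exists, not_and]
  constructor
  · intro h x hx hz; exact h x hx hz.symm
  · intro h x hx hz; exact h x hx hz.symm

lemma infDist_le (z : ℂ) (q : ℝ) (hq : 0 ≤ q) :
    Metric.infDist z Tset ≤ ‖Complex.exp q - z‖ := by
  have hmem : Complex.exp q ∈ Tset :=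
    ⟨Real.exp q, Real.one_le_exp hq, Complex.ofReal_exp q⟩
  calc Metric.infDist z Tset ≤ dist z (Complex.exp q) :=
        Metric.infDist_le_dist_of_mem hmem
    _ = ‖Complex.exp q - z‖ := by rw [dist_eq_norm, norm_sub_rev]

lemma keyBound (z₀ : ℂ) (h : ∀ x : ℝ, 1 ≤ x → z₀ ≠ (x : ℂ)) :
    ∃ ε > (0:ℝ), ∃ κ > (0:ℝ), ∃ R > (0:ℝ), ∀ z ∈ Metric.closedBall z₀ ε,
      (∀ x : ℝ, 1 ≤ x → z ≠ (x : ℂ)) ∧ ‖z‖ ≤ R ∧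
        ∀ q : ℝ, 0 ≤ q → κ * Real.exp q ≤ ‖Complex.exp q - z‖ := by
  have hz₀ : z₀ ∉ Tset := (mem_S_iff z₀).mp h
  have hc : 0 < Metric.infDist z₀ Tset :=
    (Tclosed.notMem_iff_infDist_pos ⟨(1:ℂ), (1:ℝ), Set.mem_Ici.mpr le_rfl, Complex.ofReal_one⟩).mp hz₀
  set c := Metric.infDist z₀ Tset with hcdef
  set ε := c / 2 with hεdef
  set R := ‖z₀‖ + ε + 1 with hRdef
  have hR : 0 < R := by positivity
  set κ := min (1/2 : ℝ) (c / (4 * R)) with hκdef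
  have hκ : 0 < κ := lt_min (by norm_num) (by positivity)
  refine ⟨ε, by positivity, κ, hκ, R, hR, fun z hz => ?_⟩
  have hdist : dist z z₀ ≤ ε := Metric.mem_closedBall.mp hz
  have hinf : c / 2 ≤ Metric.infDist z Tset := by
    have := Metric.infDist_le_infDist_add_dist (x := z₀) (y := z) (s := Tset)
    rw [dist_comm] at this
    linarith
  have hzS : z ∉ Tset := fun hmem => by
    have : Metric.infDist z Tset = 0 := Metric.infDist_zero_of_mem hmem
    linarith
  have hznorm : ‖z‖ ≤ R := by
    have : ‖z‖ ≤ ‖z₀‖ + dist z z₀ := by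
      rw [dist_eq_norm]
      calc ‖z‖ = ‖z₀ + (z - z₀)‖ := by ring_nf
        _ ≤ ‖z₀‖ + ‖z - z₀‖ := norm_add_le _ _
    linarith [this]
  refine ⟨(mem_S_iff z).mpr hzS, hznorm, fun q hq => ?_⟩
  rcases le_or_gt (Real.exp q) (2 * R) with hle | hlt
  · have h1 : κ * Real.exp q ≤ (c / (4 * R)) * (2 * R) := by
      apply mul_le_mul (min_le_right _ _) hle (Real.exp_pos q).le (by positivity)
    have h2 : (c / (4 * R)) * (2 * R) = c / 2 := by field_simp; ring
    have h3 : c / 2 ≤ ‖Complex.exp q - z‖ := le_trans hinf (infDist_le z q hq)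
    linarith
  · have h1 : κ * Real.exp q ≤ Real.exp q / 2 := by
      have := min_le_left (1/2 : ℝ) (c / (4 * R))
      nlinarith [Real.exp_pos q]
    have h2 : Real.exp q / 2 ≤ Real.exp q - ‖z‖ := by linarith
    have h3 : Real.exp q - ‖z‖ ≤ ‖Complex.exp q - z‖ := by
      have := norm_sub_norm_le (Complex.exp q) z
      have hne : ‖Complex.exp (q:ℂ)‖ = Real.exp q := by
        rw [Complex.norm_exp, Complex.ofReal_re]
      linarith
    linarith

section test
variable (α : ℂ) (z : ℂ)

lemma measAux (hz : ∀ q : ℝ, 0 ≤ q → Complex.exp q ≠ z) :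
    AEStronglyMeasurable (fun q : ℝ => (q:ℂ)^(α-1) * (z/(Complex.exp q - z)))
      (volume.restrict (Set.Ioi 0)) := by
  apply ContinuousOn.aestronglyMeasurable _ measurableSet_Ioi
  intro q hq
  have hq' : (0:ℝ) < q := hq
  apply ContinuousAt.continuousWithinAt
  exact (continuousAt_ofReal_cpow_const q (α-1) (Or.inr hq'.ne')).mul
    (continuousAt_const.div
      (((Complex.continuous_exp.comp Complex.continuous_ofReal).continuousAt).sub
        continuousAt_const)
      (sub_ne_zero.mpr (hz q hq'.le)))

lemma measAux' (hz : ∀ q : ℝ, 0 ≤ q → Complex.exp q ≠ z) :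
    AEStronglyMeasurable
      (fun q : ℝ => (q:ℂ)^(α-1) * (Complex.exp q/(Complex.exp q - z)^2))
      (volume.restrict (Set.Ioi 0)) := by
  apply ContinuousOn.aestronglyMeasurable _ measurableSet_Ioi
  intro q hq
  have hq' : (0:ℝ) < q := hq
  apply ContinuousAt.continuousWithinAt
  have hce : ContinuousAt (fun q : ℝ => Complex.exp q) q :=
    (Complex.continuous_exp.comp Complex.continuous_ofReal).continuousAt
  exact (continuousAt_ofReal_cpow_const q (α-1) (Or.inr hq'.ne')).mul
    (hce.div ((hce.sub continuousAt_const).pow 2)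
      (pow_ne_zero 2 (sub_ne_zero.mpr (hz q hq'.le))))

lemma normAux (q : ℝ) (hq : 0 < q) : ‖(q:ℂ)^(α-1)‖ = q ^ (α.re - 1) := by
  rw [Complex.norm_cpow_eq_rpow_re_of_pos hq]
  norm_num

lemma integrableAux (hα : 0 < α.re) (κ R : ℝ) (hκ : 0 < κ)
    (hb : ∀ q : ℝ, 0 ≤ q → κ * Real.exp q ≤ ‖Complex.exp q - z‖) (hR : ‖z‖ ≤ R) :
    IntegrableOn (fun q : ℝ => (q:ℂ)^(α-1) * (z/(Complex.exp q - z))) (Set.Ioi 0) := by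
  have hne : ∀ q : ℝ, 0 ≤ q → Complex.exp q ≠ z := by
    intro q hq h
    have := hb q hq
    rw [h, sub_self, norm_zero] at this
    nlinarith [Real.exp_pos q]
  apply Integrable.mono' (g := fun q => (R/κ) * (Real.exp (-q) * q ^ (α.re - 1)))
    ((Real.GammaIntegral_convergent hα).const_mul _) (measAux α z hne)
  rw [ae_restrict_iff' measurableSet_Ioi]
  filter_upwards with q hq
  have hq' : (0:ℝ) < q := hq
  have hbq := hb q hq'.le
  have hpos : 0 < κ * Real.exp q := by positivity
  rw [norm_mul, normAux α q hq', norm_div]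
  have hR0 : (0:ℝ) ≤ R := (norm_nonneg z).trans hR
  have h1 : ‖z‖ / ‖Complex.exp (q:ℂ) - z‖ ≤ R / (κ * Real.exp q) := by
    gcongr
  calc q ^ (α.re - 1) * (‖z‖ / ‖Complex.exp (q:ℂ) - z‖)
      ≤ q ^ (α.re - 1) * (R / (κ * Real.exp q)) := by
        apply mul_le_mul_of_nonneg_left h1 (Real.rpow_nonneg hq'.le _)
    _ = R / κ * (Real.exp (-q) * q ^ (α.re - 1)) := by
        rw [Real.exp_neg]
        field_simp

end test

lemma hasDerivAux (w z : ℂ) (hw : w ≠ z) :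
    HasDerivAt (fun y : ℂ => y / (w - y)) (w / (w - z)^2) z := by
  have h := (hasDerivAt_id z).div ((hasDerivAt_id z).const_sub w) (sub_ne_zero.mpr hw)
  convert h using 1
  · rfl
  · rfl
  · rfl
  · simp only [id]
    ring

/-- For `Re α > 0` and `z ∈ ℂ ∖ [1,∞)`, Appell's integral converges absolutely, and the
function of `z` it defines is holomorphic on `ℂ ∖ [1,∞)`. -/
theorem appell_integrable_and_holomorphic (α : ℂ) (hα : 0 < α.re) :
    (∀ z : ℂ, (∀ x : ℝ, 1 ≤ x → z ≠ (x : ℂ)) →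
        IntegrableOn (fun q : ℝ => (q : ℂ) ^ (α - 1) * (z / (Complex.exp q - z)))
          (Set.Ioi 0)) ∧
      DifferentiableOn ℂ
        (fun z : ℂ =>
          ∫ q in Set.Ioi (0 : ℝ), (q : ℂ) ^ (α - 1) * (z / (Complex.exp q - z)))
        {z : ℂ | ∀ x : ℝ, 1 ≤ x → z ≠ (x : ℂ)} := by
  have hint : ∀ z : ℂ, (∀ x : ℝ, 1 ≤ x → z ≠ (x : ℂ)) →
      IntegrableOn (fun q : ℝ => (q : ℂ) ^ (α - 1) * (z / (Complex.exp q - z)))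
        (Set.Ioi 0) := by
    intro z hz
    obtain ⟨ε, hε, κ, hκ, R, hR, hkey⟩ := keyBound z hz
    obtain ⟨-, hzR, hzb⟩ := hkey z (Metric.mem_closedBall_self hε.le)
    exact integrableAux α z hα κ R hκ hzb hzR
  refine ⟨hint, ?_⟩
  intro z₀ hz₀
  obtain ⟨ε, hε, κ, hκ, R, hR, hkey⟩ := keyBound z₀ hz₀
  have hne : ∀ z ∈ Metric.closedBall z₀ ε, ∀ q : ℝ, 0 ≤ q → Complex.exp q ≠ z := by
    intro z hz q hq h
    have := (hkey z hz).2.2 q hq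
    rw [h, sub_self, norm_zero] at this
    nlinarith [Real.exp_pos q]
  have main := hasDerivAt_integral_of_dominated_loc_of_deriv_le
    (μ := volume.restrict (Set.Ioi 0))
    (F := fun z q => (q:ℂ)^(α-1) * (z/(Complex.exp q - z)))
    (F' := fun z q => (q:ℂ)^(α-1) * (Complex.exp q/(Complex.exp q - z)^2))
    (x₀ := z₀) (bound := fun q => (κ^2)⁻¹ * (Real.exp (-q) * q ^ (α.re - 1))) (Metric.ball_mem_nhds z₀ hε)
    ?meas ?int ?meas' ?bound ?bint ?diff
  · exact (main.2.differentiableAt).differentiableWithinAt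
  case meas =>
    filter_upwards [Metric.closedBall_mem_nhds z₀ hε] with z hz
    exact measAux α z (hne z hz)
  case int =>
    obtain ⟨-, hzR, hzb⟩ := hkey z₀ (Metric.mem_closedBall_self hε.le)
    exact integrableAux α z₀ hα κ R hκ hzb hzR
  case meas' => exact measAux' α z₀ (hne z₀ (Metric.mem_closedBall_self hε.le))
  case bound =>
    rw [ae_restrict_iff' measurableSet_Ioi]
    filter_upwards with q hq z hz
    have hq' : (0:ℝ) < q := hq
    have hzc : z ∈ Metric.closedBall z₀ ε := Metric.ball_subset_closedBall hz
    have hb := (hkey z hzc).2.2 q hq'.le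
    rw [norm_mul, normAux α q hq', norm_div, norm_pow]
    have hE : ‖Complex.exp (q:ℂ)‖ = Real.exp q := by
      rw [Complex.norm_exp, Complex.ofReal_re]
    rw [hE]
    have hpos : 0 < κ * Real.exp q := by positivity
    have h2 : (κ * Real.exp q)^2 ≤ ‖Complex.exp (q:ℂ) - z‖^2 :=
      pow_le_pow_left₀ hpos.le hb 2
    have h1 : Real.exp q / ‖Complex.exp (q:ℂ) - z‖^2
        ≤ Real.exp q / (κ * Real.exp q)^2 := by gcongr
    calc q ^ (α.re - 1) * (Real.exp q / ‖Complex.exp (q:ℂ) - z‖ ^ 2)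
        ≤ q ^ (α.re - 1) * (Real.exp q / (κ * Real.exp q)^2) :=
          mul_le_mul_of_nonneg_left h1 (Real.rpow_nonneg hq'.le _)
      _ = (κ^2)⁻¹ * (Real.exp (-q) * q ^ (α.re - 1)) := by
          rw [Real.exp_neg]
          field_simp
  case bint => exact ((Real.GammaIntegral_convergent hα).const_mul _)
  case diff =>
    rw [ae_restrict_iff' measurableSet_Ioi]
    filter_upwards with q hq z hz
    have hq' : (0:ℝ) < q := hq
    have hw : Complex.exp q ≠ z := hne z (Metric.ball_subset_closedBall hz) q hq'.le
    exact (hasDerivAux (Complex.exp q) z hw).const_mul _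
end

section
/- For every complex z not of the form e^q for any q on the real line (equivalently z ∉ [0,∞) suffices), the function q ↦ z/(e^q − z) has the partial fraction expansion z/(e^q − z) = −1/2 + 1/(q − Log z) + ∑_{k=1}^∞ [ 1/(q − Log z + 2πik) + 1/(q − Log z − 2πik) ], with the series converging locally uniformly in q away from the poles. -/
open Complex Filter Topology

lemma norm_tpim (r : ℝ) : ‖(2*(Real.pi:ℂ)*Complex.I*(r:ℂ))‖ = 2*Real.pi*|r| := by
  simp [map_mul,
    abs_of_pos Real.pi_pos]

lemma lb_aux {w c : ℂ} {r : ℝ} (hc : ‖c‖ = 2*Real.pi*r) (hw : ‖w‖ ≤ r) : r ≤ ‖w + c‖ := by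
  have h1 : ‖c‖ ≤ ‖w + c‖ + ‖w‖ := by
    calc ‖c‖ = ‖(w + c) - w‖ := by ring_nf
    _ ≤ ‖w + c‖ + ‖w‖ := norm_sub_le _ _
  nlinarith [Real.pi_gt_three, norm_nonneg w, hc, hw]

lemma pairalg (A B c : ℂ) (hc : c ≠ 0) (h1 : B - c ≠ 0) (h2 : B + c ≠ 0) :
    B * A / (c * (B - c)) + B * A / (-c * (B + c)) = A * (1 / (B + c) + 1 / (B - c)) := by
  field_simp
  ring

lemma key (w : ℂ) (hw : ∀ n : ℤ, w ≠ 2 * Real.pi * Complex.I * n) :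
    HasSum (fun k : ℕ =>
        1 / (w + 2 * Real.pi * Complex.I * (k + 1)) +
        1 / (w - 2 * Real.pi * Complex.I * (k + 1)))
      (1 / (Complex.exp w - 1) - 1 / w + 1 / 2) := by
  have hw0 : w ≠ 0 := by simpa using hw 0
  have hexp : Complex.exp w ≠ 1 := by
    intro h
    obtain ⟨n, hn⟩ := Complex.exp_eq_one_iff.mp h
    exact hw n (by rw [hn]; ring)
  have hexp' : Complex.exp w - 1 ≠ 0 := sub_ne_zero.mpr hexp
  have hne : ∀ n : ℤ, w - 2 * Real.pi * Complex.I * n ≠ 0 := fun n => sub_ne_zero.mpr (hw n)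
  have htpi : ∀ n : ℤ, n ≠ 0 → (2 * (Real.pi:ℂ) * Complex.I * n) ≠ 0 := by
    intro n hn
    simp [Real.pi_ne_zero, Complex.I_ne_zero, hn]
  -- setup
  set f : ℝ → ℂ := fun t => Complex.exp (w * t) - (Complex.exp w - 1) * t with hf_def
  have hf01 : f 0 = f (0 + 1) := by simp [hf_def]
  have hfderiv : ∀ x : ℝ, HasDerivAt f (w * Complex.exp (w * x) - (Complex.exp w - 1)) x := by
    intro x
    have h1 : HasDerivAt (fun t : ℝ => Complex.exp (w * t)) (w * Complex.exp (w * x)) x := by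
      have h0 : HasDerivAt (fun t : ℝ => w * (t : ℂ)) w x := by
        simpa using ((hasDerivAt_id x).ofReal_comp.const_mul w)
      simpa [mul_comm] using h0.cexp
    have h2 : HasDerivAt (fun t : ℝ => (Complex.exp w - 1) * (t : ℂ)) (Complex.exp w - 1) x := by
      simpa using ((hasDerivAt_id x).ofReal_comp.const_mul (Complex.exp w - 1))
    exact h1.sub h2
  have hfcont : Continuous f := by
    apply Continuous.sub
    · exact Complex.continuous_exp.comp (continuous_const.mul Complex.continuous_ofReal)
    · exact continuous_const.mul Complex.continuous_ofReal
  haveI : Fact ((0:ℝ) < 1) := ⟨one_pos⟩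
  set F : C(AddCircle (1:ℝ), ℂ) :=
    ⟨AddCircle.liftIco 1 0 f, AddCircle.liftIco_continuous hf01 hfcont.continuousOn⟩ with hF_def
  have h01 : (0:ℝ) < 0 + 1 := by norm_num
  set g : ℤ → ℂ := fourierCoeff (⇑F) with hg_def
  have hgF : ∀ n : ℤ, g n = fourierCoeffOn h01 f n := fun n => fourierCoeff_liftIco_eq f n
  have hexp_shift : ∀ n : ℤ, Complex.exp (w - 2 * Real.pi * Complex.I * n) = Complex.exp w := by
    intro n
    rw [Complex.exp_sub, show (2*(Real.pi:ℂ)*Complex.I*n) = (n:ℂ)*(2*Real.pi*Complex.I) by ring,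
      Complex.exp_int_mul_two_pi_mul_I]
    simp
  have hInt : ∀ c : ℂ, c ≠ 0 → ∫ x in (0:ℝ)..1, Complex.exp (c * x) =
      (Complex.exp c - 1) / c := by
    intro c hc
    rw [integral_exp_mul_complex hc]
    norm_num
  have hcont' : Continuous (fun x : ℝ => w * Complex.exp (w * x) - (Complex.exp w - 1)) := by
    apply Continuous.sub _ continuous_const
    exact continuous_const.mul
      (Complex.continuous_exp.comp (continuous_const.mul Complex.continuous_ofReal))
  have hcoeff' : ∀ n : ℤ, n ≠ 0 →
      fourierCoeffOn h01 (fun x => w * Complex.exp (w * x) - (Complex.exp w - 1)) n =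
        w * (Complex.exp w - 1) / (w - 2 * Real.pi * Complex.I * n) := by
    intro n hn
    rw [fourierCoeffOn_eq_integral]
    have hptw : ∀ x : ℝ, (fourier (-n) (x : AddCircle ((0:ℝ)+1-0))) •
        (w * Complex.exp (w * x) - (Complex.exp w - 1)) =
        w * Complex.exp ((w - 2 * Real.pi * Complex.I * n) * x)
          - (Complex.exp w - 1) * Complex.exp ((- (2 * Real.pi * Complex.I * n)) * x) := by
      intro x
      rw [fourier_coe_apply, smul_eq_mul]
      have h1 : 2*(Real.pi:ℂ)*Complex.I*((-n : ℤ) : ℂ)*(x:ℂ)/((((0:ℝ)+1-0) : ℝ) : ℂ)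
          = -(2 * (Real.pi:ℂ) * Complex.I * (n:ℂ)) * (x:ℂ) := by push_cast; ring
      rw [h1]
      rw [show ((w - 2 * Real.pi * Complex.I * n) * x : ℂ)
        = (- (2 * Real.pi * Complex.I * n)) * x + w * x by ring, Complex.exp_add]
      ring
    rw [intervalIntegral.integral_congr (fun x _ => hptw x)]
    rw [intervalIntegral.integral_sub, intervalIntegral.integral_const_mul,
      intervalIntegral.integral_const_mul]
    · rw [show ((0:ℝ)+1) = 1 by norm_num, hInt _ (hne n), hInt _ (by simpa using htpi n hn)]
      rw [hexp_shift n,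
        show Complex.exp (-(2 * Real.pi * Complex.I * n)) = 1 by
          rw [show (-(2*(Real.pi:ℂ)*Complex.I*n)) = ((-n : ℤ):ℂ)*(2*Real.pi*Complex.I) by
              push_cast; ring, Complex.exp_int_mul_two_pi_mul_I]]
      norm_num
      ring
    · exact (continuous_const.mul (Complex.continuous_exp.comp
        (continuous_const.mul Complex.continuous_ofReal))).intervalIntegrable _ _
    · exact (continuous_const.mul (Complex.continuous_exp.comp
        (continuous_const.mul Complex.continuous_ofReal))).intervalIntegrable _ _
  have hgne : ∀ n : ℤ, n ≠ 0 → g n =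
      w * (Complex.exp w - 1) /
        ((2 * Real.pi * Complex.I * n) * (w - 2 * Real.pi * Complex.I * n)) := by
    intro n hn
    rw [hgF n, fourierCoeffOn_of_hasDerivAt h01 hn (fun x _ => hfderiv x)
      (hcont'.intervalIntegrable _ _), hcoeff' n hn]
    rw [show f (0+1) - f 0 = 0 by rw [← hf01, sub_self]]
    push_cast
    rw [mul_zero, zero_sub]
    field_simp [htpi n hn, hne n]
    all_goals norm_num
  have hg0 : g 0 = (Complex.exp w - 1) / w - (Complex.exp w - 1) / 2 := by
    rw [hgF 0, fourierCoeffOn_eq_integral]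
    simp only [neg_zero, fourier_zero, one_smul, zero_add, sub_zero]
    simp only [hf_def]
    rw [intervalIntegral.integral_sub
      ((by fun_prop : Continuous fun x : ℝ => Complex.exp (w * (x:ℂ))).intervalIntegrable _ _)
      ((by fun_prop : Continuous fun x : ℝ => (Complex.exp w - 1) * (x:ℂ)).intervalIntegrable _ _),
      intervalIntegral.integral_const_mul]
    have hx : ∫ x in (0:ℝ)..1, (x:ℂ) = 1/2 := by
      rw [show (fun x : ℝ => (x:ℂ)) = (fun x : ℝ => ((id x : ℝ) : ℂ)) from rfl]
      rw [intervalIntegral.integral_ofReal]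
      norm_num [integral_id]
    rw [hx, hInt w hw0]
    norm_num
    ring
  have hMaj : Summable (fun n : ℤ => ‖w * (Complex.exp w - 1)‖ * (1 / (n:ℝ)^2)) :=
    (Real.summable_one_div_int_pow.mpr one_lt_two).mul_left _
  have hbound : ∀ n : ℤ, 1 ≤ |(n:ℝ)| → ‖w‖ ≤ |(n:ℝ)| →
      ‖g n‖ ≤ ‖w * (Complex.exp w - 1)‖ * (1 / (n:ℝ)^2) := by
    intro n h1 h2
    have hn0 : n ≠ 0 := by
      intro h; rw [h] at h1; norm_num at h1
    rw [hgne n hn0, norm_div, mul_one_div]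
    have e1 : ‖2 * (Real.pi:ℂ) * Complex.I * (n:ℂ)‖ = 2 * Real.pi * |(n:ℝ)| := by
      rw [show ((n:ℂ)) = (((n:ℝ)):ℂ) by push_cast; ring]
      exact norm_tpim _
    have e2 : |(n:ℝ)| ≤ ‖w - 2 * (Real.pi:ℂ) * Complex.I * (n:ℂ)‖ := by
      have h := lb_aux (w := w) (c := -(2 * (Real.pi:ℂ) * Complex.I * (n:ℂ))) (r := |(n:ℝ)|)
        (by rw [norm_neg, e1]) h2
      simpa [sub_eq_add_neg] using h
    have e3 : |(n:ℝ)| ≤ ‖2 * (Real.pi:ℂ) * Complex.I * (n:ℂ)‖ := by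
      rw [e1]; nlinarith [Real.pi_gt_three, abs_nonneg ((n:ℝ))]
    have habs : (0:ℝ) < |(n:ℝ)| := lt_of_lt_of_le one_pos h1
    apply div_le_div_of_nonneg_left (norm_nonneg _)
    · rw [← _root_.sq_abs]; positivity
    · rw [norm_mul, ← _root_.sq_abs ((n:ℝ)), pow_two]
      exact mul_le_mul e3 e2 (abs_nonneg _) (norm_nonneg _)
  have hsum : Summable g := by
    apply Summable.of_norm_bounded_eventually hMaj
    have hgen : ∀ n : ℤ, (⌈‖w‖⌉ + 1 : ℤ) ≤ |n| →
        ‖g n‖ ≤ ‖w * (Complex.exp w - 1)‖ * (1 / (n:ℝ)^2) := by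
      intro n hn
      have hc0 : (0:ℤ) ≤ ⌈‖w‖⌉ := Int.ceil_nonneg (norm_nonneg w)
      have hr : |(n:ℝ)| = ((|n| : ℤ) : ℝ) := by push_cast; rfl
      apply hbound n
      · rw [hr]
        have : (1:ℤ) ≤ |n| := by linarith
        exact_mod_cast this
      · rw [hr]
        calc ‖w‖ ≤ (⌈‖w‖⌉ : ℝ) := Int.le_ceil _
          _ ≤ ((|n| : ℤ) : ℝ) := by
            have : (⌈‖w‖⌉ : ℤ) ≤ |n| := by linarith
            exact_mod_cast this
    rw [Int.cofinite_eq, eventually_sup]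
    constructor
    · filter_upwards [eventually_le_atBot (-(⌈‖w‖⌉ + 1) : ℤ)] with n hn
      exact hgen n (le_abs.mpr (Or.inr (by linarith)))
    · filter_upwards [eventually_ge_atTop ((⌈‖w‖⌉ + 1) : ℤ)] with n hn
      exact hgen n (le_abs.mpr (Or.inl hn))
  have hs0 := has_pointwise_sum_fourier_series_of_summable hsum (0 : AddCircle (1:ℝ))
  have hF0 : F (0 : AddCircle (1:ℝ)) = 1 := by
    have hz : (0 : AddCircle (1:ℝ)) = (((0:ℝ)) : AddCircle (1:ℝ)) := rfl
    rw [hz]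
    show AddCircle.liftIco 1 0 f (((0:ℝ) : AddCircle (1:ℝ))) = 1
    rw [AddCircle.liftIco_coe_apply (by norm_num : (0:ℝ) ∈ Set.Ico (0:ℝ) (0+1))]
    simp [hf_def]
  rw [← hg_def] at hs0
  simp only [fourier_eval_zero, smul_eq_mul, mul_one, hF0] at hs0
  have h1 := hs0.nat_add_neg
  have hpair : ∀ k : ℕ, g ((k:ℤ) + 1) + g (-((k:ℤ) + 1)) =
      (Complex.exp w - 1) * (1 / (w + 2 * Real.pi * Complex.I * ((k:ℂ) + 1)) +
        1 / (w - 2 * Real.pi * Complex.I * ((k:ℂ) + 1))) := by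
    intro k
    have hk1 : ((k:ℤ) + 1) ≠ 0 := by omega
    rw [hgne _ hk1, hgne _ (neg_ne_zero.mpr hk1)]
    have d1 : w - 2*(Real.pi:ℂ)*Complex.I*((k:ℂ)+1) ≠ 0 := by
      have h := hne ((k:ℤ)+1); push_cast at h; exact h
    have d2 : w + 2*(Real.pi:ℂ)*Complex.I*((k:ℂ)+1) ≠ 0 := by
      intro h
      apply hne (-((k:ℤ)+1))
      push_cast
      linear_combination h
    have d3 : (2*(Real.pi:ℂ)*Complex.I*((k:ℂ)+1)) ≠ 0 := by
      have h := htpi ((k:ℤ)+1) hk1; push_cast at h; exact h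
    push_cast
    rw [show (2*(Real.pi:ℂ)*Complex.I*(-((k:ℂ)+1))) = -(2*(Real.pi:ℂ)*Complex.I*((k:ℂ)+1)) by ring]
    rw [sub_neg_eq_add]
    exact pairalg _ _ _ d3 d1 d2
  have hsum10 : (1 : ℂ) + g 0 = (1 - g 0) + ∑ i ∈ Finset.range 1, (g (i:ℤ) + g (-(i:ℤ))) := by
    simp
    try ring
  rw [hsum10] at h1
  have h2 := (hasSum_nat_add_iff 1).mpr h1
  have hfe : (fun n : ℕ => g ((n+1 : ℕ):ℤ) + g (-((n+1 : ℕ):ℤ))) =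
      (fun k : ℕ => (Complex.exp w - 1) * (1 / (w + 2 * Real.pi * Complex.I * ((k:ℂ) + 1)) +
        1 / (w - 2 * Real.pi * Complex.I * ((k:ℂ) + 1)))) := by
    funext k
    have h := hpair k
    push_cast
    push_cast at h
    exact h
  rw [hfe] at h2
  have h4 := h2.mul_left (Complex.exp w - 1)⁻¹
  simp only [inv_mul_cancel_left₀ hexp'] at h4
  have hval : (Complex.exp w - 1)⁻¹ * (1 - g 0) =
      1 / (Complex.exp w - 1) - 1 / w + 1 / 2 := by
    rw [hg0]
    field_simp
    ring
  rw [← hval]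
  exact h4

lemma pair_bound {a : ℂ} {R : ℝ} {k : ℕ} (ha : ‖a‖ ≤ R) (hk : R ≤ (k:ℝ)+1)
    (h1 : a + 2*Real.pi*Complex.I*((k:ℂ)+1) ≠ 0)
    (h2 : a - 2*Real.pi*Complex.I*((k:ℂ)+1) ≠ 0) :
    ‖1/(a + 2*Real.pi*Complex.I*((k:ℂ)+1)) + 1/(a - 2*Real.pi*Complex.I*((k:ℂ)+1))‖
      ≤ 2*R/(((k:ℝ)+1)^2) := by
  set c : ℂ := 2*Real.pi*Complex.I*((k:ℂ)+1) with hc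
  have hnc : ‖c‖ = 2*Real.pi*((k:ℝ)+1) := by
    rw [hc, show ((k:ℂ)+1) = ((((k:ℝ)+1 : ℝ)) : ℂ) by push_cast; ring, norm_tpim,
      _root_.abs_of_nonneg (by positivity : (0:ℝ) ≤ (k:ℝ)+1)]
  have e1 : ((k:ℝ)+1) ≤ ‖a + c‖ := lb_aux hnc (ha.trans hk)
  have e2 : ((k:ℝ)+1) ≤ ‖a - c‖ := by
    have h := lb_aux (c := -c) (by rw [norm_neg]; exact hnc) (ha.trans hk)
    simpa [sub_eq_add_neg] using h
  have hsum : 1/(a+c) + 1/(a-c) = 2*a/((a+c)*(a-c)) := by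
    field_simp
    ring
  rw [hsum, norm_div]
  have hR0 : (0:ℝ) ≤ R := (norm_nonneg a).trans ha
  have hnum : ‖(2:ℂ)*a‖ ≤ 2*R := by
    rw [norm_mul]
    have h2 : ‖(2:ℂ)‖ = 2 := by simp
    rw [h2]
    linarith [ha]
  apply div_le_div₀ (by linarith) hnum (by positivity)
  rw [norm_mul, pow_two]
  exact mul_le_mul e1 e2 (by positivity) (norm_nonneg _)

/-- Mittag-Leffler (partial fraction) expansion of `q ↦ z/(e^q - z)` for `z ∉ [0,∞)`:
`z/(e^q - z) = -1/2 + 1/(q - Log z) + ∑_{k≥1} [1/(q - Log z + 2πik) + 1/(q - Log z - 2πik)]`,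
the series of partial sums converging locally uniformly on the complement of the poles. -/
theorem mittag_leffler_exp (z : ℂ) (hz : ∀ x : ℝ, 0 ≤ x → z ≠ (x : ℂ)) :
    (∀ q : ℂ, Complex.exp q ≠ z →
        z / (Complex.exp q - z) =
          -1 / 2 + 1 / (q - Complex.log z) +
            ∑' k : ℕ,
              (1 / (q - Complex.log z + 2 * Real.pi * Complex.I * (k + 1)) +
               1 / (q - Complex.log z - 2 * Real.pi * Complex.I * (k + 1)))) ∧
      TendstoLocallyUniformlyOn
        (fun (N : ℕ) (q : ℂ) =>
          -1 / 2 + 1 / (q - Complex.log z) +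
            ∑ k ∈ Finset.range N,
              (1 / (q - Complex.log z + 2 * Real.pi * Complex.I * (k + 1)) +
               1 / (q - Complex.log z - 2 * Real.pi * Complex.I * (k + 1))))
        (fun q : ℂ => z / (Complex.exp q - z))
        atTop
        {q : ℂ | Complex.exp q ≠ z} := by
  have hz0 : z ≠ 0 := by simpa using hz 0 le_rfl
  have hwint : ∀ q : ℂ, Complex.exp q ≠ z →
      ∀ n : ℤ, q - Complex.log z ≠ 2*Real.pi*Complex.I*(n:ℂ) := by
    intro q hq n h
    apply hq
    have hq' : q = Complex.log z + 2*Real.pi*Complex.I*(n:ℂ) := by linear_combination h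
    rw [hq', Complex.exp_add, Complex.exp_log hz0,
      show (2*(Real.pi:ℂ)*Complex.I*(n:ℂ)) = (n:ℂ)*(2*Real.pi*Complex.I) by ring,
      Complex.exp_int_mul_two_pi_mul_I, mul_one]
  have hpart1 : ∀ q : ℂ, Complex.exp q ≠ z →
      z / (Complex.exp q - z) =
        -1 / 2 + 1 / (q - Complex.log z) +
          ∑' k : ℕ,
            (1 / (q - Complex.log z + 2 * Real.pi * Complex.I * (k + 1)) +
             1 / (q - Complex.log z - 2 * Real.pi * Complex.I * (k + 1))) := by
    intro q hq
    have hk := key (q - Complex.log z) (hwint q hq)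
    rw [hk.tsum_eq]
    have hEz : Complex.exp q - z ≠ 0 := sub_ne_zero.mpr hq
    have hw0 : q - Complex.log z ≠ 0 := by simpa using hwint q hq 0
    have hexpw : Complex.exp (q - Complex.log z) = Complex.exp q / z := by
      rw [Complex.exp_sub, Complex.exp_log hz0]
    rw [hexpw]
    have h1 : Complex.exp q / z - 1 = (Complex.exp q - z)/z := by field_simp
    rw [h1, one_div_div]
    ring
  refine ⟨hpart1, ?_⟩
  have hU : IsOpen {q : ℂ | Complex.exp q ≠ z} := isOpen_ne.preimage Complex.continuous_exp
  rw [tendstoLocallyUniformlyOn_iff_forall_isCompact hU]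
  intro K hKU hK
  obtain ⟨C, hC⟩ := hK.exists_bound_of_continuousOn
    ((continuous_id.sub continuous_const).continuousOn :
      ContinuousOn (fun q : ℂ => q - Complex.log z) K)
  set R := max C 0 with hR_def
  have hR : ∀ q ∈ K, ‖q - Complex.log z‖ ≤ R := fun q hq => (hC q hq).trans (le_max_left _ _)
  have hR0 : 0 ≤ R := le_max_right _ _
  set Fk : ℕ → ℂ → ℂ := fun k q =>
    1 / (q - Complex.log z + 2*Real.pi*Complex.I*((k:ℂ)+1)) +
    1 / (q - Complex.log z - 2*Real.pi*Complex.I*((k:ℂ)+1)) with hFk_def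
  have hden1 : ∀ k : ℕ, ∀ q ∈ K, q - Complex.log z + 2*Real.pi*Complex.I*((k:ℂ)+1) ≠ 0 := by
    intro k q hq h
    apply hwint q (hKU hq) (-((k:ℤ)+1))
    push_cast
    linear_combination h
  have hden2 : ∀ k : ℕ, ∀ q ∈ K, q - Complex.log z - 2*Real.pi*Complex.I*((k:ℂ)+1) ≠ 0 := by
    intro k q hq h
    apply hwint q (hKU hq) ((k:ℤ)+1)
    push_cast
    linear_combination h
  have hCk : ∀ k : ℕ, ∃ B, ∀ q ∈ K, ‖Fk k q‖ ≤ B := by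
    intro k
    apply hK.exists_bound_of_continuousOn
    apply ContinuousOn.add
    · exact ContinuousOn.div continuousOn_const (by fun_prop) (fun q hq => hden1 k q hq)
    · exact ContinuousOn.div continuousOn_const (by fun_prop) (fun q hq => hden2 k q hq)
  choose B hB using hCk
  set u : ℕ → ℝ := fun k => if R ≤ (k:ℝ)+1 then 2*R/(((k:ℝ)+1)^2) else B k with hu_def
  have hbd : ∀ k : ℕ, ∀ q ∈ K, ‖Fk k q‖ ≤ u k := by
    intro k q hq
    rw [hu_def]
    by_cases h : R ≤ (k:ℝ)+1
    · simp only [if_pos h]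
      exact pair_bound (hR q hq) h (hden1 k q hq) (hden2 k q hq)
    · simp only [if_neg h]
      exact hB k q hq
  have hu : Summable u := by
    set m : ℕ := ⌈R⌉₊ with hm
    have hv : Summable (fun k : ℕ => 2*R/(((k:ℝ)+1)^2)) := by
      have h0 : Summable (fun k : ℕ => 1/((k:ℝ)^2)) :=
        Real.summable_one_div_nat_pow.mpr one_lt_two
      have h1 := (summable_nat_add_iff 1).mpr h0
      have h2 : Summable (fun k : ℕ => 1/(((k:ℝ)+1)^2)) :=
        h1.congr (fun k => by push_cast; ring)
      exact (h2.mul_left (2*R)).congr (fun k => by rw [mul_one_div])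
    apply (summable_nat_add_iff m).mp
    refine Summable.congr ((summable_nat_add_iff m).mpr hv) ?_
    intro k
    have hle : R ≤ ((k+m : ℕ):ℝ)+1 := by
      have h := Nat.le_ceil R
      rw [← hm] at h
      push_cast
      linarith
    rw [hu_def]
    simp only [if_pos hle]
  have htuo := tendstoUniformlyOn_tsum_nat hu hbd
  have hconst : TendstoUniformlyOn
      (fun (_ : ℕ) (q : ℂ) => -1/2 + 1/(q - Complex.log z))
      (fun q : ℂ => -1/2 + 1/(q - Complex.log z)) atTop K := by
    intro v hv
    filter_upwards with N x hx
    exact refl_mem_uniformity hv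
  have hadd := hconst.add htuo
  apply hadd.congr_right
  intro q hq
  exact (hpart1 q (hKU hq)).symm
end
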